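/- Let G = (V, E) be a finite simple graph and let w : E → ℝ satisfy 0 ≤ w(e) for all e and Σ_{e ∋ x} w(e) ≤ 1/4 for every vertex x. Let (X_e)_{e ∈ E} be independent Bernoulli random variables with P(X_e = 1) = w(e). Call two distinct edges neighboring if they share an endpoint. Fix a vertex v. Then the probability that there exists an edge e incident to v with X_e = 1 and X_{e'} = 0 for every edge e' neighboring e is at least (1/2)·Σ_{e ∋ v} w(e). -/

import Mathlib

open MeasureTheory ProbabilityTheory

lemma aux_one_sub_sum_le_prod {α : Type*} (s : Finset α) (g : α → ℝ)
    (h0 : ∀ i ∈ s, 0 ≤ g i) (h1 : ∀ i ∈ s, g i ≤ 1) :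
    1 - ∑ i ∈ s, g i ≤ ∏ i ∈ s, (1 - g i) := by
  induction s using Finset.cons_induction with
  | empty => simp
  | cons a s ha ih =>
    rw [Finset.sum_cons, Finset.prod_cons]
    have h0a := h0 a (Finset.mem_cons_self a s)
    have h1a := h1 a (Finset.mem_cons_self a s)
    have ih' := ih (fun i hi => h0 i (Finset.mem_cons_of_mem hi))
      (fun i hi => h1 i (Finset.mem_cons_of_mem hi))
    have hs0 : 0 ≤ ∑ i ∈ s, g i := Finset.sum_nonneg fun i hi => h0 i (Finset.mem_cons_of_mem hi)
    nlinarith [mul_le_mul_of_nonneg_left ih' (sub_nonneg.2 h1a)]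

theorem self_nomination_success
    {V : Type*} [Fintype V] [DecidableEq V]
    (G : SimpleGraph V) [DecidableRel G.Adj]
    (w : Sym2 V → ℝ)
    (hw0 : ∀ e ∈ G.edgeSet, 0 ≤ w e)
    (hw14 : ∀ x : V, ∑ e ∈ G.edgeFinset.filter (fun e => x ∈ e), w e ≤ 1 / 4)
    {Ω : Type*} [MeasurableSpace Ω] (P : Measure Ω) [IsProbabilityMeasure P]
    (X : Sym2 V → Ω → Bool)
    (hmeas : ∀ e, Measurable (X e))
    (hindep : iIndepFun (m := fun _ : G.edgeSet => (inferInstance : MeasurableSpace Bool))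
      (fun e : G.edgeSet => X e) P)
    (hBern : ∀ e ∈ G.edgeSet, (P {ω | X e ω = true}).toReal = w e)
    (v : V) :
    ENNReal.ofReal ((1 / 2) * ∑ e ∈ G.edgeFinset.filter (fun e => v ∈ e), w e) ≤
      P {ω : Ω | ∃ e ∈ G.edgeSet, v ∈ e ∧ X e ω = true ∧
        ∀ f ∈ G.edgeSet, f ≠ e → (∃ y : V, y ∈ e ∧ y ∈ f) → X f ω = false} := by
  classical
  set I : Finset (Sym2 V) := G.edgeFinset.filter (fun e => v ∈ e) with hI
  set N : Sym2 V → Finset (Sym2 V) :=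
    fun e => G.edgeFinset.filter (fun f => f ≠ e ∧ ∃ y, y ∈ e ∧ y ∈ f) with hN
  set A : Sym2 V → Set Ω :=
    fun e => {ω | X e ω = true} ∩ ⋂ f ∈ N e, {ω | X f ω = false} with hA
  -- basic facts
  have hwle1 : ∀ e ∈ G.edgeSet, w e ≤ 1 := by
    intro e he
    rw [← hBern e he]
    have h1 : P {ω | X e ω = true} ≤ 1 := prob_le_one
    calc (P {ω | X e ω = true}).toReal ≤ (1 : ENNReal).toReal :=
        ENNReal.toReal_mono ENNReal.one_ne_top h1
    _ = 1 := by simp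
  -- measurability of events
  have hXmeas : ∀ e (b : Bool), MeasurableSet {ω | X e ω = b} := by
    intro e b
    exact (hmeas e) (measurableSet_singleton b)
  have hAmeas : ∀ e, MeasurableSet (A e) := by
    intro e
    exact (hXmeas e true).inter (Finset.measurableSet_biInter _ fun f _ => hXmeas f false)
  -- sum of weights over neighbors is at most 1/2
  have hNsum : ∀ e ∈ G.edgeFinset, ∑ f ∈ N e, w f ≤ 1 / 2 := by
    intro e he
    induction e using Sym2.ind with
    | _ x y =>
      have hsub : N (s(x, y)) ⊆ G.edgeFinset.filter (fun f => x ∈ f) ∪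
          G.edgeFinset.filter (fun f => y ∈ f) := by
        intro f hf
        simp only [hN, Finset.mem_filter] at hf
        obtain ⟨hfE, _, z, hz1, hz2⟩ := hf
        rw [Sym2.mem_iff] at hz1
        rcases hz1 with rfl | rfl
        · exact Finset.mem_union_left _ (Finset.mem_filter.2 ⟨hfE, hz2⟩)
        · exact Finset.mem_union_right _ (Finset.mem_filter.2 ⟨hfE, hz2⟩)
      have h0 : ∀ f ∈ G.edgeFinset.filter (fun f => x ∈ f) ∪
          G.edgeFinset.filter (fun f => y ∈ f), 0 ≤ w f := by
        intro f hf
        simp only [Finset.mem_union, Finset.mem_filter] at hf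
        rcases hf with ⟨hf, _⟩ | ⟨hf, _⟩ <;>
          exact hw0 f (SimpleGraph.mem_edgeFinset.1 hf)
      calc ∑ f ∈ N (s(x, y)), w f
          ≤ ∑ f ∈ G.edgeFinset.filter (fun f => x ∈ f) ∪
              G.edgeFinset.filter (fun f => y ∈ f), w f :=
            Finset.sum_le_sum_of_subset_of_nonneg hsub (fun f hf _ => h0 f hf)
        _ ≤ ∑ f ∈ G.edgeFinset.filter (fun f => x ∈ f), w f +
              ∑ f ∈ G.edgeFinset.filter (fun f => y ∈ f), w f := by
            have hui : ∑ f ∈ G.edgeFinset.filter (fun f => x ∈ f) ∪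
                  G.edgeFinset.filter (fun f => y ∈ f), w f +
                ∑ f ∈ G.edgeFinset.filter (fun f => x ∈ f) ∩
                  G.edgeFinset.filter (fun f => y ∈ f), w f =
                ∑ f ∈ G.edgeFinset.filter (fun f => x ∈ f), w f +
                ∑ f ∈ G.edgeFinset.filter (fun f => y ∈ f), w f :=
              Finset.sum_union_inter
            have hnn : 0 ≤ ∑ f ∈ G.edgeFinset.filter (fun f => x ∈ f) ∩
                G.edgeFinset.filter (fun f => y ∈ f), w f := by
              apply Finset.sum_nonneg
              intro f hf
              exact h0 f (Finset.mem_union_left _ (Finset.mem_inter.1 hf).1)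
            linarith
        _ ≤ 1 / 4 + 1 / 4 := add_le_add (hw14 x) (hw14 y)
        _ = 1 / 2 := by norm_num
  -- key probability lower bound
  have key : ∀ e ∈ I, ENNReal.ofReal (w e / 2) ≤ P (A e) := by
    intro e heI
    have heE : e ∈ G.edgeFinset := (Finset.mem_filter.1 heI).1
    have he : e ∈ G.edgeSet := SimpleGraph.mem_edgeFinset.1 heE
    set M : Finset G.edgeSet := Finset.univ.filter (fun f : G.edgeSet => f.1 ∈ N e) with hM
    have heM : (⟨e, he⟩ : G.edgeSet) ∉ M := by
      simp only [hM, Finset.mem_filter, hN, Finset.mem_filter]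
      tauto
    set S : Finset G.edgeSet := insert ⟨e, he⟩ M with hS
    set sets : G.edgeSet → Set Bool := fun f => if f.1 = e then {true} else {false} with hsets
    have hprod := hindep.measure_inter_preimage_eq_mul (sets := sets) S
      (fun i _ => by by_cases h : i.1 = e <;> simp [hsets, h, measurableSet_singleton])
    have hIA : (⋂ i ∈ S, (fun ω => X i.1 ω) ⁻¹' sets i) = A e := by
      ext ω
      simp only [Set.mem_iInter, Set.mem_preimage, hA, Set.mem_inter_iff, Set.mem_setOf_eq,
        Set.mem_iInter]
      constructor
      · intro h
        constructor
        · have := h ⟨e, he⟩ (Finset.mem_insert_self _ _)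
          simpa [hsets] using this
        · intro f hf
          have hfE : f ∈ G.edgeSet := SimpleGraph.mem_edgeFinset.1
            (Finset.mem_filter.1 hf).1
          have hfne : f ≠ e := (Finset.mem_filter.1 hf).2.1
          have := h ⟨f, hfE⟩ (Finset.mem_insert_of_mem (by simp [hM, hf]))
          simpa [hsets, hfne] using this
      · rintro ⟨h1, h2⟩ i hi
        rcases Finset.mem_insert.1 hi with rfl | hi
        · simpa [hsets] using h1
        · have hiN : i.1 ∈ N e := (Finset.mem_filter.1 hi).2
          have hine : i.1 ≠ e := (Finset.mem_filter.1 hiN).2.1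
          simpa [hsets, hine] using h2 i.1 hiN
    rw [hIA] at hprod
    rw [hprod, hS, Finset.prod_insert heM]
    have hept : ((fun ω => X e ω) ⁻¹' sets ⟨e, he⟩) = {ω | X e ω = true} := by
      ext ω
      simp [hsets]
    -- compute the product in the reals
    have hwf1 : ∀ f ∈ N e, w f ≤ 1 := fun f hf =>
      hwle1 f (SimpleGraph.mem_edgeFinset.1 (Finset.mem_filter.1 hf).1)
    have hwf0 : ∀ f ∈ N e, 0 ≤ w f := fun f hf =>
      hw0 f (SimpleGraph.mem_edgeFinset.1 (Finset.mem_filter.1 hf).1)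
    have hfalse : ∀ f ∈ G.edgeSet, P {ω | X f ω = false} = ENNReal.ofReal (1 - w f) := by
      intro f hf
      have hc : {ω | X f ω = false} = {ω | X f ω = true}ᶜ := by
        ext ω; simp [Set.mem_compl_iff]
      rw [hc, prob_compl_eq_one_sub (hXmeas f true)]
      rw [ENNReal.ofReal_sub _ (hw0 f hf), ENNReal.ofReal_one, ← hBern f hf,
        ENNReal.ofReal_toReal (measure_ne_top P _)]
    have htrue : P {ω | X e ω = true} = ENNReal.ofReal (w e) := by
      rw [← hBern e he, ENNReal.ofReal_toReal (measure_ne_top P _)]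
    have hMprod : ∏ i ∈ M, P ((fun ω => X i.1 ω) ⁻¹' sets i) =
        ∏ f ∈ N e, ENNReal.ofReal (1 - w f) := by
      apply Finset.prod_bij (i := fun (f : G.edgeSet) (_ : f ∈ M) => f.1)
      · intro a ha
        exact (Finset.mem_filter.1 ha).2
      · intro a _ b _ h
        exact Subtype.ext h
      · intro b hb
        have hbE : b ∈ G.edgeSet := SimpleGraph.mem_edgeFinset.1 (Finset.mem_filter.1 hb).1
        exact ⟨⟨b, hbE⟩, by simp [hM, hb], rfl⟩
      · intro a ha
        have haN : a.1 ∈ N e := (Finset.mem_filter.1 ha).2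
        have hane : a.1 ≠ e := (Finset.mem_filter.1 haN).2.1
        have haE : a.1 ∈ G.edgeSet := a.2
        have : ((fun ω => X a.1 ω) ⁻¹' sets a) = {ω | X a.1 ω = false} := by
          simp only [hsets, if_neg hane]
          rfl
        rw [this, hfalse a.1 haE]
    rw [hept, htrue, hMprod]
    -- now the real-number estimate
    have hprodN : ∏ f ∈ N e, ENNReal.ofReal (1 - w f) =
        ENNReal.ofReal (∏ f ∈ N e, (1 - w f)) := by
      rw [ENNReal.ofReal_prod_of_nonneg]
      intro f hf
      linarith [hwf1 f hf]
    rw [hprodN, ← ENNReal.ofReal_mul (hw0 e he)]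
    apply ENNReal.ofReal_le_ofReal
    have hNe : e ∈ G.edgeFinset := heE
    have h12 : 1 - ∑ f ∈ N e, w f ≤ ∏ f ∈ N e, (1 - w f) :=
      aux_one_sub_sum_le_prod _ _ hwf0 hwf1
    have hsum := hNsum e heE
    have : (1 : ℝ) / 2 ≤ ∏ f ∈ N e, (1 - w f) := by linarith
    calc w e / 2 = w e * (1 / 2) := by ring
    _ ≤ w e * ∏ f ∈ N e, (1 - w f) :=
        mul_le_mul_of_nonneg_left this (hw0 e he)
  -- disjointness
  have hdisj : (I : Set (Sym2 V)).PairwiseDisjoint A := by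
    intro e he f hf hef
    have he' := Finset.mem_filter.1 (Finset.mem_coe.1 he)
    have hf' := Finset.mem_filter.1 (Finset.mem_coe.1 hf)
    apply Set.disjoint_left.2
    intro ω hωe hωf
    have hfN : f ∈ N e := by
      simp only [hN, Finset.mem_filter]
      exact ⟨hf'.1, hef.symm, v, he'.2, hf'.2⟩
    have h1 : X f ω = false := by
      have := hωe.2
      simp only [Set.mem_iInter] at this
      exact this f hfN
    have h2 : X f ω = true := hωf.1
    rw [h1] at h2
    exact Bool.false_ne_true h2
  -- union is inside the target
  have hsub : (⋃ e ∈ I, A e) ⊆ {ω : Ω | ∃ e ∈ G.edgeSet, v ∈ e ∧ X e ω = true ∧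
      ∀ f ∈ G.edgeSet, f ≠ e → (∃ y : V, y ∈ e ∧ y ∈ f) → X f ω = false} := by
    intro ω hω
    simp only [Set.mem_iUnion] at hω
    obtain ⟨e, heI, hωe⟩ := hω
    have heE : e ∈ G.edgeFinset := (Finset.mem_filter.1 heI).1
    refine ⟨e, SimpleGraph.mem_edgeFinset.1 heE, (Finset.mem_filter.1 heI).2, hωe.1, ?_⟩
    intro f hf hfne ⟨y, hy1, hy2⟩
    have hfN : f ∈ N e := by
      simp only [hN, Finset.mem_filter]
      exact ⟨SimpleGraph.mem_edgeFinset.2 hf, hfne, y, hy1, hy2⟩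
    have := hωe.2
    simp only [Set.mem_iInter] at this
    exact this f hfN
  -- conclude
  have hsum_eq : (1 / 2 : ℝ) * ∑ e ∈ I, w e = ∑ e ∈ I, w e / 2 := by
    rw [Finset.mul_sum]
    exact Finset.sum_congr rfl fun e _ => by ring
  calc ENNReal.ofReal ((1 / 2) * ∑ e ∈ I, w e)
      = ∑ e ∈ I, ENNReal.ofReal (w e / 2) := by
        rw [hsum_eq]
        exact ENNReal.ofReal_sum_of_nonneg fun e heI => by
          have := hw0 e (SimpleGraph.mem_edgeFinset.1 (Finset.mem_filter.1 heI).1)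
          linarith
    _ ≤ ∑ e ∈ I, P (A e) := Finset.sum_le_sum key
    _ = P (⋃ e ∈ I, A e) := (measure_biUnion_finset hdisj fun e _ => hAmeas e).symm
    _ ≤ _ := measure_mono hsub
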